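/- Let n ≥ 2 and let p' be a permutation of {1, 2, …, n−1} such that s(p') avoids both 231 and 312. Then the two permutations of length n obtained by prepending the entry n to p' and by appending the entry n to p' both have the property that their stack-sorted image avoids 231 and 312; moreover, distinct choices of p' and of prepend/append give distinct permutations, so this construction contributes exactly 2·|s^{-1}(Av_{n-1}(231,312))| permutations of length n whose stack-sorted image avoids 231 and 312 and in which n is the first or last entry. -/

import Mathlib

/-- The stack-sorting map `s`, implemented with a fuel parameter (the fuel
`l.length` always suffices, since the maximum of a nonempty list of naturals is
attained, so both recursive calls are on strictly shorter lists).
`s(ε) = ε` and `s(LmR) = s(L) s(R) m` where `m` is the maximum entry. -/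
def stackSortAux : ℕ → List ℕ → List ℕ
  | 0, _ => []
  | _ + 1, [] => []
  | fuel + 1, a :: t =>
      let m := (a :: t).foldr max 0
      stackSortAux fuel ((a :: t).takeWhile (fun x => x ≠ m)) ++
        stackSortAux fuel (((a :: t).dropWhile (fun x => x ≠ m)).tail) ++ [m]

/-- The stack-sorting map on finite sequences of (distinct) naturals. -/
def stackSort (l : List ℕ) : List ℕ := stackSortAux l.length l

/-- `l` is a permutation of `{1, 2, …, n}`, written in one-line notation. -/
def IsPermList (n : ℕ) (l : List ℕ) : Prop :=
  l.Perm ((List.range n).map (· + 1))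

/-- The sequence `p` contains the pattern `q`: there is a strictly increasing choice
of positions of `p` on which the entries compare exactly as the entries of `q` do. -/
def ContainsPat (p q : List ℕ) : Prop :=
  ∃ f : Fin q.length → Fin p.length, StrictMono f ∧
    ∀ i j : Fin q.length, q.get i < q.get j ↔ p.get (f i) < p.get (f j)

/-- The sequence `p` avoids the pattern `q`. -/
def AvoidsPat (p q : List ℕ) : Prop := ¬ ContainsPat p q

lemma stackSortAux_nil (fuel : ℕ) : stackSortAux fuel [] = [] := by
  cases fuel <;> rfl

lemma foldr_max_mem (l : List ℕ) (h : l ≠ []) : l.foldr max 0 ∈ l := by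
  induction l with
  | nil => simp at h
  | cons a t ih =>
    rcases eq_or_ne t [] with rfl | ht
    · simp
    · rcases max_choice a (t.foldr max 0) with h' | h'
      · simp [List.foldr_cons, h']
      · rw [List.foldr_cons, h']
        exact List.mem_cons_of_mem _ (ih ht)

lemma le_foldr_max {l : List ℕ} {x : ℕ} (h : x ∈ l) : x ≤ l.foldr max 0 := by
  induction l with
  | nil => simp at h
  | cons a t ih =>
    rcases List.mem_cons.mp h with rfl | h'
    · exact le_max_left _ _
    · exact le_trans (ih h') (le_max_right _ _)

lemma foldr_max_le {l : List ℕ} {b : ℕ} (h : ∀ x ∈ l, x ≤ b) : l.foldr max 0 ≤ b := by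
  induction l with
  | nil => simpa using Nat.zero_le b
  | cons a t ih =>
    rw [List.foldr_cons]
    exact max_le (h a (by simp)) (ih fun x hx => h x (by simp [hx]))

lemma foldr_max_eq {l : List ℕ} {n : ℕ} (hmem : n ∈ l) (hle : ∀ x ∈ l, x ≤ n) :
    l.foldr max 0 = n :=
  le_antisymm (foldr_max_le hle) (le_foldr_max hmem)

lemma takeWhile_dropWhile_append_max {l : List ℕ} {n : ℕ} (h : n ∉ l) :
    (l ++ [n]).takeWhile (fun x => x ≠ n) = l ∧
      (l ++ [n]).dropWhile (fun x => x ≠ n) = [n] := by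
  induction l with
  | nil => constructor <;> simp [List.takeWhile_cons, List.dropWhile_cons]
  | cons a t ih =>
    have ha : a ≠ n := by rintro rfl; exact h (by simp)
    have h2 := ih (fun hm => h (by simp [hm]))
    constructor
    · rw [List.cons_append, List.takeWhile_cons, if_pos (by simp [ha]), h2.1]
    · rw [List.cons_append, List.dropWhile_cons, if_pos (by simp [ha]), h2.2]

lemma stackSort_cons_max {n : ℕ} {p' : List ℕ} (hlt : ∀ x ∈ p', x < n) :
    stackSort (n :: p') = stackSort p' ++ [n] := by
  have hm : (n :: p').foldr max 0 = n := by
    refine foldr_max_eq (by simp) ?_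
    rintro x hx
    rcases List.mem_cons.mp hx with rfl | h
    · exact le_rfl
    · exact le_of_lt (hlt _ h)
  show stackSortAux (p'.length + 1) (n :: p') = _
  rw [stackSortAux]
  simp only [hm]
  rw [List.takeWhile_cons, List.dropWhile_cons]
  simp [stackSortAux_nil, stackSort]

lemma stackSort_append_max {n : ℕ} {p' : List ℕ} (hn : n ∉ p') (hlt : ∀ x ∈ p', x < n) :
    stackSort (p' ++ [n]) = stackSort p' ++ [n] := by
  have htd := takeWhile_dropWhile_append_max hn
  have hm : (p' ++ [n]).foldr max 0 = n := by
    refine foldr_max_eq (by simp) ?_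
    intro x hx
    rcases List.mem_append.mp hx with h | h
    · exact le_of_lt (hlt _ h)
    · simp at h; omega
  cases p' with
  | nil => simp [stackSort, stackSortAux]
  | cons a t =>
    show stackSortAux ((t ++ [n]).length + 1) (a :: (t ++ [n])) = _
    rw [stackSortAux]
    simp only [show (a : ℕ) :: (t ++ [n]) = (a :: t) ++ [n] from rfl, hm, htd.1, htd.2,
      List.tail_cons, stackSortAux_nil, List.append_nil]
    simp only [List.length_append, List.length_cons, List.length_nil]
    rfl

lemma mem_stackSortAux : ∀ (fuel : ℕ) (l : List ℕ) (x : ℕ), x ∈ stackSortAux fuel l → x ∈ l := by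
  intro fuel
  induction fuel with
  | zero => intro l x h; simp [stackSortAux] at h
  | succ f ih =>
    intro l x h
    match l with
    | [] => simp [stackSortAux] at h
    | a :: t =>
      rw [stackSortAux] at h
      simp only [List.mem_append, List.mem_singleton] at h
      rcases h with (h | h) | h
      · exact (List.takeWhile_prefix _).subset (ih _ _ h)
      · exact (List.dropWhile_suffix _).subset ((List.tail_sublist _).subset (ih _ _ h))
      · subst h; exact foldr_max_mem _ (by simp)

lemma mem_stackSort {l : List ℕ} {x : ℕ} (h : x ∈ stackSort l) : x ∈ l :=
  mem_stackSortAux _ _ _ h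

lemma containsPat_of_append {t : List ℕ} {x : ℕ} {q : List ℕ}
    (h : ContainsPat t q) : ContainsPat (t ++ [x]) q := by
  obtain ⟨f, hf, hiff⟩ := h
  refine ⟨fun i => ⟨(f i).val, by have := (f i).isLt; simp⟩, ?_, ?_⟩
  · intro i j hij
    exact Fin.mk_lt_mk.mpr (hf hij)
  · intro i j
    rw [hiff]
    simp only [List.get_eq_getElem]
    rw [List.getElem_append_left (f i).isLt, List.getElem_append_left (f j).isLt]

lemma containsPat_of_append_max {q : List ℕ} (hq : q.length = 3)
    (hqlt : q.getD 2 0 < q.getD 0 0) {t : List ℕ} {n : ℕ}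
    (hlt : ∀ x ∈ t, x < n)
    (h : ContainsPat (t ++ [n]) q) : ContainsPat t q := by
  obtain ⟨f, hf, hiff⟩ := h
  have h0 : 0 < q.length := by omega
  have h2 : 2 < q.length := by omega
  set i0 : Fin q.length := ⟨0, h0⟩ with hi0
  set i2 : Fin q.length := ⟨2, h2⟩ with hi2
  by_cases hc : (f i2).val < t.length
  · refine ⟨fun i => ⟨(f i).val, lt_of_le_of_lt ?_ hc⟩, ?_, ?_⟩
    · have hile : i ≤ i2 := by
        rw [Fin.le_def]; have := i.isLt; simp [hi2]; omega
      exact hf.monotone hile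
    · intro i j hij
      exact Fin.mk_lt_mk.mpr (hf hij)
    · intro i j
      rw [hiff]
      simp only [List.get_eq_getElem]
      rw [List.getElem_append_left, List.getElem_append_left]
  · have h2len : (f i2).val = t.length := by
      have := (f i2).isLt; simp at this; omega
    have hql : q.get i2 < q.get i0 := by
      simp only [List.get_eq_getElem]
      rw [← List.getD_eq_getElem q 0 h2, ← List.getD_eq_getElem q 0 h0]
      exact hqlt
    have hkey := (hiff i2 i0).mp hql
    have h02 : (f i0).val < t.length := by
      have : f i0 < f i2 := hf (by rw [Fin.lt_def]; simp [hi0, hi2])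
      rw [Fin.lt_def] at this; omega
    have hv2 : (t ++ [n]).get (f i2) = n := by
      simp only [List.get_eq_getElem]
      exact List.getElem_concat_length h2len _
    have hv0 : (t ++ [n]).get (f i0) < n := by
      simp only [List.get_eq_getElem]
      rw [List.getElem_append_left h02]
      exact hlt _ (List.getElem_mem _)
    rw [hv2] at hkey
    omega

lemma avoidsPat_append_max_iff {q : List ℕ} (hq : q.length = 3)
    (hqlt : q.getD 2 0 < q.getD 0 0) {t : List ℕ} {n : ℕ}
    (hlt : ∀ x ∈ t, x < n) :
    AvoidsPat (t ++ [n]) q ↔ AvoidsPat t q := by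
  unfold AvoidsPat
  constructor
  · exact fun h hc => h (containsPat_of_append hc)
  · exact fun h hc => h (containsPat_of_append_max hq hqlt hlt hc)

lemma isPermList_lt {k : ℕ} {p : List ℕ} (h : IsPermList k p) : ∀ x ∈ p, x < k + 1 := by
  intro x hx
  have := (h.mem_iff).mp hx
  simp only [List.mem_map, List.mem_range] at this
  omega

lemma isPermList_not_mem {k : ℕ} {p : List ℕ} (h : IsPermList k p) : k + 1 ∉ p :=
  fun hx => by have := isPermList_lt h _ hx; omega

lemma isPermList_length {k : ℕ} {p : List ℕ} (h : IsPermList k p) : p.length = k := by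
  simpa using h.length_eq

lemma range_map_succ (k : ℕ) :
    (List.range (k+1)).map (· + 1) = (List.range k).map (· + 1) ++ [k+1] := by
  rw [show k + 1 = k.succ from rfl, List.range_succ, List.map_append]
  rfl

lemma isPermList_cons {k : ℕ} {p' : List ℕ} (h : IsPermList k p') :
    IsPermList (k+1) ((k+1) :: p') := by
  unfold IsPermList at *
  rw [range_map_succ]
  exact (h.cons (k+1)).trans (List.perm_append_singleton _ _).symm

lemma isPermList_append {k : ℕ} {p' : List ℕ} (h : IsPermList k p') :
    IsPermList (k+1) (p' ++ [k+1]) := by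
  unfold IsPermList at *
  rw [range_map_succ]
  exact h.append_right [k+1]

lemma isPermList_of_cons {k : ℕ} {p' : List ℕ} (h : IsPermList (k+1) ((k+1) :: p')) :
    IsPermList k p' := by
  unfold IsPermList at *
  rw [range_map_succ] at h
  exact (h.trans (List.perm_append_singleton _ _)).cons_inv

lemma isPermList_of_append {k : ℕ} {p' : List ℕ} (h : IsPermList (k+1) (p' ++ [k+1])) :
    IsPermList k p' := by
  unfold IsPermList at *
  rw [range_map_succ] at h
  exact (((List.perm_append_singleton _ _).symm.trans h).trans
    (List.perm_append_singleton _ _)).cons_inv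

lemma stackSort_lt {k : ℕ} {p' : List ℕ} (hp : IsPermList k p') :
    ∀ x ∈ stackSort p', x < k + 1 :=
  fun x hx => isPermList_lt hp x (mem_stackSort hx)

lemma mk_mem_cons {k : ℕ} {p' : List ℕ} (hp : IsPermList k p')
    (h1 : AvoidsPat (stackSort p') [2,3,1]) (h2 : AvoidsPat (stackSort p') [3,1,2]) :
    IsPermList (k+1) ((k+1) :: p') ∧
      AvoidsPat (stackSort ((k+1) :: p')) [2,3,1] ∧
      AvoidsPat (stackSort ((k+1) :: p')) [3,1,2] ∧
      (((k+1) :: p').head? = some (k+1) ∨ ((k+1) :: p').getLast? = some (k+1)) := by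
  have hlt := isPermList_lt hp
  have hslt := stackSort_lt hp
  rw [stackSort_cons_max hlt]
  exact ⟨isPermList_cons hp,
    (avoidsPat_append_max_iff (q := [2,3,1]) rfl (by decide) hslt).mpr h1,
    (avoidsPat_append_max_iff (q := [3,1,2]) rfl (by decide) hslt).mpr h2,
    Or.inl rfl⟩

lemma mk_mem_append {k : ℕ} {p' : List ℕ} (hp : IsPermList k p')
    (h1 : AvoidsPat (stackSort p') [2,3,1]) (h2 : AvoidsPat (stackSort p') [3,1,2]) :
    IsPermList (k+1) (p' ++ [k+1]) ∧
      AvoidsPat (stackSort (p' ++ [k+1])) [2,3,1] ∧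
      AvoidsPat (stackSort (p' ++ [k+1])) [3,1,2] ∧
      ((p' ++ [k+1]).head? = some (k+1) ∨ (p' ++ [k+1]).getLast? = some (k+1)) := by
  have hlt := isPermList_lt hp
  have hslt := stackSort_lt hp
  rw [stackSort_append_max (isPermList_not_mem hp) hlt]
  exact ⟨isPermList_append hp,
    (avoidsPat_append_max_iff (q := [2,3,1]) rfl (by decide) hslt).mpr h1,
    (avoidsPat_append_max_iff (q := [3,1,2]) rfl (by decide) hslt).mpr h2,
    Or.inr (List.getLast?_eq_some_iff.mpr ⟨p', rfl⟩)⟩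

lemma ne_cons_append {k : ℕ} (hk : 1 ≤ k) (p₁ p₂ : List ℕ) (h2 : IsPermList k p₂) :
    (k+1) :: p₁ ≠ p₂ ++ [k+1] := by
  intro heq
  cases p₂ with
  | nil => have := isPermList_length h2; simp at this; omega
  | cons a t =>
    rw [List.cons_append] at heq
    injection heq with ha _
    have := isPermList_lt h2 a (by simp)
    omega

/-- let `n ≥ 2` and let `p'` be a permutation of `{1, …, n-1}`
with `s(p')` avoiding both `231` and `312`. Then prepending and appending the
entry `n` to `p'` both yield permutations whose stack-sorted image avoids `231`
and `312`; distinct choices of `p'` and of prepend/append give distinct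
permutations, and this construction contributes exactly
`2·|s⁻¹(Av_{n-1}(231, 312))|` permutations of length `n` whose stack-sorted
image avoids `231` and `312` and in which `n` is the first or last entry. -/
theorem prepend_append_av231_312 (n : ℕ) (hn : 2 ≤ n) :
    (∀ p' : List ℕ, IsPermList (n - 1) p' →
      AvoidsPat (stackSort p') [2,3,1] → AvoidsPat (stackSort p') [3, 1, 2] →
        (AvoidsPat (stackSort (n :: p')) [2,3,1] ∧
          AvoidsPat (stackSort (n :: p')) [3, 1, 2]) ∧
        (AvoidsPat (stackSort (p' ++ [n])) [2,3,1] ∧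
          AvoidsPat (stackSort (p' ++ [n])) [3, 1, 2])) ∧
    (∀ p₁ p₂ : List ℕ, IsPermList (n - 1) p₁ → IsPermList (n - 1) p₂ →
      n :: p₁ ≠ p₂ ++ [n]) ∧
    Nat.card {p : List ℕ // IsPermList n p ∧
        AvoidsPat (stackSort p) [2,3,1] ∧ AvoidsPat (stackSort p) [3, 1, 2] ∧
        (p.head? = some n ∨ p.getLast? = some n)} =
      2 * Nat.card {p' : List ℕ // IsPermList (n - 1) p' ∧
        AvoidsPat (stackSort p') [2,3,1] ∧ AvoidsPat (stackSort p') [3, 1, 2]} := by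
  obtain ⟨k, rfl⟩ : ∃ k, n = k + 1 := ⟨n - 1, by omega⟩
  have hk : 1 ≤ k := by omega
  simp only [Nat.add_sub_cancel]
  refine ⟨?_, ?_, ?_⟩
  · intro p' hp h1 h2
    have c := mk_mem_cons hp h1 h2
    have a := mk_mem_append hp h1 h2
    exact ⟨⟨c.2.1, c.2.2.1⟩, a.2.1, a.2.2.1⟩
  · intro p₁ p₂ _ h2
    exact ne_cons_append hk p₁ p₂ h2
  · have key : Nat.card (Bool × {p' : List ℕ // IsPermList k p' ∧
        AvoidsPat (stackSort p') [2,3,1] ∧ AvoidsPat (stackSort p') [3, 1, 2]}) =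
        Nat.card {p : List ℕ // IsPermList (k+1) p ∧
        AvoidsPat (stackSort p) [2,3,1] ∧ AvoidsPat (stackSort p) [3, 1, 2] ∧
        (p.head? = some (k+1) ∨ p.getLast? = some (k+1))} := by
      apply Nat.card_eq_of_bijective (fun x => match x with
        | (true, ⟨p', hp⟩) => ⟨(k+1) :: p', mk_mem_cons hp.1 hp.2.1 hp.2.2⟩
        | (false, ⟨p', hp⟩) => ⟨p' ++ [k+1], mk_mem_append hp.1 hp.2.1 hp.2.2⟩)
      constructor
      · rintro ⟨(_|_), p1, hp1⟩ ⟨(_|_), p2, hp2⟩ h <;>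
          simp only [Subtype.mk.injEq] at h
        · have : p1 = p2 := List.append_cancel_right h
          subst this; rfl
        · exact absurd h.symm (ne_cons_append hk p2 p1 hp1.1)
        · exact absurd h (ne_cons_append hk p1 p2 hp2.1)
        · have : p1 = p2 := by injection h
          subst this; rfl
      · rintro ⟨p, hperm, h1, h2, hend⟩
        rcases hend with hh | hl
        · cases p with
          | nil => simp at hh
          | cons a t =>
            have ha : a = k + 1 := by simpa using hh
            subst ha
            have hp' : IsPermList k t := isPermList_of_cons hperm
            have hlt := isPermList_lt hp'
            have hslt := stackSort_lt hp'
            rw [stackSort_cons_max hlt] at h1 h2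
            exact ⟨(true, ⟨t, hp',
              (avoidsPat_append_max_iff (q := [2,3,1]) rfl (by decide) hslt).mp h1,
              (avoidsPat_append_max_iff (q := [3,1,2]) rfl (by decide) hslt).mp h2⟩), rfl⟩
        · obtain ⟨t, rfl⟩ := List.getLast?_eq_some_iff.mp hl
          have hp' : IsPermList k t := isPermList_of_append hperm
          have hlt := isPermList_lt hp'
          have hslt := stackSort_lt hp'
          rw [stackSort_append_max (isPermList_not_mem hp') hlt] at h1 h2
          exact ⟨(false, ⟨t, hp',
            (avoidsPat_append_max_iff (q := [2,3,1]) rfl (by decide) hslt).mp h1,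
            (avoidsPat_append_max_iff (q := [3,1,2]) rfl (by decide) hslt).mp h2⟩), rfl⟩
    rw [← key, Nat.card_prod]
    simp [Nat.card_eq_fintype_card]
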